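/- (Halving lowers safety and demand at every price.) Let 0 < B₂ < B₁ be two block subsidies and, for i = 1,2, let H_i(P) denote the unique H > 0 with H·φ(H) = P·(B_i+Φ). Then for every P > 0: ς(P, H₂(P)) < ς(P, H₁(P)), and consequently the aggregate demand curve shifts down: D(P, ς(P, H₂(P))) < D(P, ς(P, H₁(P))). -/

import Mathlib

open Filter

/-- **Halving lowers safety and demand at every price.** Let `0 < B₂ < B₁` be
two block subsidies and, for `i = 1,2`, let `H_i(P)` denote the unique `H > 0` with
`H·φ(H) = P·(B_i+Φ)`. Then for every `P > 0`: `ς(P, H₂(P)) < ς(P, H₁(P))`, and consequently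
the aggregate demand curve shifts down: `D(P, ς(P, H₂(P))) < D(P, ς(P, H₁(P)))`. -/
theorem halving_lowers_safety_and_demand
    (φ : ℝ → ℝ)
    (hφc : ContinuousOn φ (Set.Ici 0))
    (hφm : StrictMonoOn φ (Set.Ici 0))
    (hφ0 : 0 ≤ φ 0)
    (hφtop : Filter.Tendsto (fun H : ℝ => H * φ H) Filter.atTop Filter.atTop)
    (Φ : ℝ) (hΦ : 0 ≤ Φ)
    (B₁ B₂ : ℝ) (hB₂ : 0 < B₂) (hB : B₂ < B₁)
    (H₁ H₂ : ℝ → ℝ)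
    (hH₁ : ∀ P : ℝ, 0 < P → 0 < H₁ P ∧ H₁ P * φ (H₁ P) = P * (B₁ + Φ))
    (hH₂ : ∀ P : ℝ, 0 < P → 0 < H₂ P ∧ H₂ P * φ (H₂ P) = P * (B₂ + Φ))
    (Ψ : ℝ → ℝ)
    (hΨc : Continuous Ψ)
    (hΨm : StrictMono Ψ)
    (hΨ01 : ∀ x : ℝ, 0 < Ψ x ∧ Ψ x < 1)
    (hΨbot : Tendsto Ψ atBot (nhds 0))
    (hΨtop : Tendsto Ψ atTop (nhds 1))
    (g k σ sstar : ℝ) (hg : 0 < g) (hk : 0 < k) (hσ : 0 < σ)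
    (θU θS δ e : ℝ) (hθU : 0 < θU) (hθS : 0 < θS) (hδ : 0 ≤ δ) (he : 0 < e) :
    ∀ P : ℝ, 0 < P →
      Ψ ((sstar - g * P + k * H₂ P) / σ) < Ψ ((sstar - g * P + k * H₁ P) / σ) ∧
      θU * Ψ ((sstar - g * P + k * H₂ P) / σ) * P ^ (-e) +
          (θS * Ψ ((sstar - g * P + k * H₂ P) / σ) - δ) * P⁻¹
        < θU * Ψ ((sstar - g * P + k * H₁ P) / σ) * P ^ (-e) +
            (θS * Ψ ((sstar - g * P + k * H₁ P) / σ) - δ) * P⁻¹ := by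
  intro P hP
  obtain ⟨h1pos, h1eq⟩ := hH₁ P hP
  obtain ⟨h2pos, h2eq⟩ := hH₂ P hP
  have hHlt : H₂ P < H₁ P := by
    by_contra hle
    push_neg at hle
    have hφ1 : 0 < φ (H₁ P) := lt_of_le_of_lt hφ0 (hφm (le_refl (0:ℝ)) h1pos.le h1pos)
    have key : H₁ P * φ (H₁ P) ≤ H₂ P * φ (H₂ P) := by
      rcases eq_or_lt_of_le hle with heq | hlt
      · rw [heq]
      · have hφle : φ (H₁ P) ≤ φ (H₂ P) := (hφm h1pos.le (h1pos.trans hlt).le hlt).le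
        exact mul_le_mul hle hφle hφ1.le h2pos.le
    rw [h1eq, h2eq] at key
    have : B₁ + Φ ≤ B₂ + Φ := le_of_mul_le_mul_left (by linarith) hP
    linarith
  have hΨlt : Ψ ((sstar - g * P + k * H₂ P) / σ) < Ψ ((sstar - g * P + k * H₁ P) / σ) := by
    apply hΨm
    apply div_lt_div_of_pos_right ?_ hσ
    nlinarith
  refine ⟨hΨlt, ?_⟩
  have hPe : 0 < P ^ (-e) := Real.rpow_pos_of_pos hP _
  have hPi : 0 < P⁻¹ := inv_pos.mpr hP
  set s₂ := Ψ ((sstar - g * P + k * H₂ P) / σ)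
  set s₁ := Ψ ((sstar - g * P + k * H₁ P) / σ)
  nlinarith [mul_pos hθU hPe, mul_pos hθS hPi]
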